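/- Let ω be a semi-selforthogonal subcategory of a triangulated category T. If X ∈ ω̌ (X is finitely coresolved by add ω) and Y ∈ ωX (the co-Auslander class), then Hom_T(X, Y[1]) = 0. -/

import Mathlib

open CategoryTheory Category Limits Pretriangulated

universe v u

namespace RelSing

variable {C : Type u} [Category.{v} C] [Preadditive C] [HasZeroObject C]
  [HasShift C ℤ] [∀ n : ℤ, (shiftFunctor C n).Additive] [Pretriangulated C]

/-- `ω` is semi-selforthogonal (presilting): `Hom(M, M'[i]) = 0` for `M, M' ∈ ω`, `i > 0`. -/
def SemiSelfOrth (ω : Set C) : Prop :=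
  ∀ M ∈ ω, ∀ M' ∈ ω, ∀ i : ℤ, 0 < i → ∀ f : M ⟶ M'⟦i⟧, f = 0

/-- `add ω`: closure of `ω` under zero objects, finite direct sums (expressed via
biproduct data) and direct summands (retracts). -/
inductive AddCat (ω : Set C) : C → Prop
  | of {X : C} (hX : X ∈ ω) : AddCat ω X
  | zero {X : C} (hX : IsZero X) : AddCat ω X
  | sum {X Y Z : C} (i₁ : X ⟶ Z) (i₂ : Y ⟶ Z) (p₁ : Z ⟶ X) (p₂ : Z ⟶ Y)
      (h₁ : i₁ ≫ p₁ = 𝟙 X) (h₂ : i₂ ≫ p₂ = 𝟙 Y) (h₁₂ : i₁ ≫ p₂ = 0) (h₂₁ : i₂ ≫ p₁ = 0)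
      (hZ : p₁ ≫ i₁ + p₂ ≫ i₂ = 𝟙 Z) (hX : AddCat ω X) (hY : AddCat ω Y) : AddCat ω Z
  | retract {X Y : C} (i : X ⟶ Y) (r : Y ⟶ X) (hir : i ≫ r = 𝟙 X) (hY : AddCat ω Y) :
      AddCat ω X

/-- The left orthogonal `⊥ω`. -/
def leftPerp (ω : Set C) : Set C :=
  {N | ∀ M ∈ ω, ∀ i : ℤ, 0 < i → ∀ f : N ⟶ M⟦i⟧, f = 0}

/-- The right orthogonal `ω⊥`. -/
def rightPerp (ω : Set C) : Set C :=
  {N | ∀ M ∈ ω, ∀ i : ℤ, 0 < i → ∀ f : M ⟶ N⟦i⟧, f = 0}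

/-- The Auslander class `X_ω`: objects `T₀` with triangles `T_i → M_i → T_{i+1} → T_i[1]`
for all `i ≥ 0`, `M_i ∈ add ω`, `T_i ∈ ⊥ω`. -/
def Auslander (ω : Set C) : Set C :=
  {X | ∃ (T : ℕ → C) (M : ℕ → C) (f : ∀ i, T i ⟶ M i) (g : ∀ i, M i ⟶ T (i + 1))
      (h : ∀ i, T (i + 1) ⟶ (T i)⟦(1 : ℤ)⟧),
    T 0 = X ∧ (∀ i, Triangle.mk (f i) (g i) (h i) ∈ distTriang C) ∧
      (∀ i, AddCat ω (M i)) ∧ (∀ i, T i ∈ leftPerp ω)}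

/-- The co-Auslander class `ωX`: objects `T₀` with triangles `T_{i+1} → M_i → T_i → T_{i+1}[1]`
for all `i ≥ 0`, `M_i ∈ add ω`, `T_i ∈ ω⊥`. -/
def coAuslander (ω : Set C) : Set C :=
  {X | ∃ (T : ℕ → C) (M : ℕ → C) (f : ∀ i, T (i + 1) ⟶ M i) (g : ∀ i, M i ⟶ T i)
      (h : ∀ i, T i ⟶ (T (i + 1))⟦(1 : ℤ)⟧),
    T 0 = X ∧ (∀ i, Triangle.mk (f i) (g i) (h i) ∈ distTriang C) ∧
      (∀ i, AddCat ω (M i)) ∧ (∀ i, T i ∈ rightPerp ω)}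

/-- `check S` (`S̬`): objects `X₀` with triangles `X_i → C_i → X_{i+1} → X_i[1]` for
`0 ≤ i ≤ r`, `C_i ∈ S`, `X_{r+1} = 0`. -/
def CheckClass (S : Set C) : Set C :=
  {X | ∃ (r : ℕ) (T : ℕ → C) (M : ℕ → C) (f : ∀ i, T i ⟶ M i) (g : ∀ i, M i ⟶ T (i + 1))
      (h : ∀ i, T (i + 1) ⟶ (T i)⟦(1 : ℤ)⟧),
    T 0 = X ∧ IsZero (T (r + 1)) ∧ (∀ i ≤ r, Triangle.mk (f i) (g i) (h i) ∈ distTriang C) ∧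
      (∀ i ≤ r, M i ∈ S)}

/-- `hat S` (`Ŝ`): objects `X₀` with triangles `X_{i+1} → C_i → X_i → X_{i+1}[1]` for
`0 ≤ i ≤ r`, `C_i ∈ S`, `X_{r+1} = 0`. -/
def HatClass (S : Set C) : Set C :=
  {X | ∃ (r : ℕ) (T : ℕ → C) (M : ℕ → C) (f : ∀ i, T (i + 1) ⟶ M i) (g : ∀ i, M i ⟶ T i)
      (h : ∀ i, T i ⟶ (T (i + 1))⟦(1 : ℤ)⟧),
    T 0 = X ∧ IsZero (T (r + 1)) ∧ (∀ i ≤ r, Triangle.mk (f i) (g i) (h i) ∈ distTriang C) ∧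
      (∀ i ≤ r, M i ∈ S)}

/-- A (strictly full) triangulated subcategory, as a predicate on sets of objects. -/
structure IsTriangulatedSub (S : Set C) : Prop where
  zero : ∀ X : C, IsZero X → X ∈ S
  iso : ∀ {X Y : C}, (X ≅ Y) → X ∈ S → Y ∈ S
  shift : ∀ X ∈ S, ∀ n : ℤ, X⟦n⟧ ∈ S
  ext₂ : ∀ T ∈ distTriang C, T.obj₁ ∈ S → T.obj₃ ∈ S → T.obj₂ ∈ S

/-- `⟨S⟩`: the smallest triangulated subcategory containing `S`. -/
def genTriang (S : Set C) : Set C :=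
  ⋂₀ {U : Set C | S ⊆ U ∧ IsTriangulatedSub U}

/-- `S[+] = {X | X ≅ C[n], C ∈ S, n ≥ 0}`. -/
def plusClass (S : Set C) : Set C :=
  {X | ∃ Y ∈ S, ∃ n : ℕ, Nonempty (X ≅ Y⟦(n : ℤ)⟧)}

/-- `S[-] = {X | X ≅ C[n], C ∈ S, n ≤ 0}`. -/
def minusClass (S : Set C) : Set C :=
  {X | ∃ Y ∈ S, ∃ n : ℕ, Nonempty (X ≅ Y⟦(-(n : ℤ))⟧)}

/-- `f` factors through an object of `add ω`. -/
def FactorsThruAdd (ω : Set C) {X Y : C} (f : X ⟶ Y) : Prop :=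
  ∃ (M : C) (g : X ⟶ M) (h : M ⟶ Y), AddCat ω M ∧ g ≫ h = f

/-- The `ω`-Gorenstein objects: `G_ω = ωX ∩ X_ω`. -/
def Gor (ω : Set C) : Set C := coAuslander ω ∩ Auslander ω


end RelSing

open RelSing

variable {C : Type u} [Category.{v} C] [Preadditive C] [HasZeroObject C]
  [HasShift C ℤ] [∀ n : ℤ, (shiftFunctor C n).Additive] [Pretriangulated C]

lemma addCat_hom_zero (ω : Set C) {M N : C} (hN : N ∈ rightPerp ω)
    (hM : AddCat ω M) (n : ℤ) (hn : 0 < n) (φ : M ⟶ N⟦n⟧) : φ = 0 := by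
  induction hM with
  | of h => exact hN _ h n hn φ
  | zero h => exact h.eq_of_src φ 0
  | sum i₁ i₂ p₁ p₂ h₁ h₂ h₁₂ h₂₁ hZ hX hY ihX ihY =>
    rw [← id_comp φ, ← hZ, Preadditive.add_comp, assoc, assoc,
      ihX (i₁ ≫ φ), ihY (i₂ ≫ φ), comp_zero, comp_zero, add_zero]
  | retract i r hir hY ih =>
    rw [← id_comp φ, ← hir, assoc, ih (r ≫ φ), comp_zero]

lemma shift_neg_one_hom_zero {A B : C} (n : ℤ)
    (h : ∀ v : A ⟶ B⟦n + 1⟧, v = 0) (u : A⟦(-1 : ℤ)⟧ ⟶ B⟦n⟧) : u = 0 := by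
  apply (shiftFunctor C (1 : ℤ)).map_injective
  have hv : (shiftFunctorCompIsoId C (-1 : ℤ) 1 (by ring)).inv.app A ≫ u⟦(1 : ℤ)⟧'
      ≫ (shiftFunctorAdd' C n 1 (n + 1) rfl).inv.app B = 0 := h _
  have := hv
  rw [← assoc] at this
  replace this := congrArg (fun t => (shiftFunctorCompIsoId C (-1 : ℤ) 1 (by ring)).hom.app A
    ≫ t ≫ (shiftFunctorAdd' C n 1 (n + 1) rfl).hom.app B) this
  simpa using this


/-- For a semi-selforthogonal `ω`, if `X ∈ check(add ω)` and `Y ∈ ωX`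
(the co-Auslander class), then `Hom(X, Y[1]) = 0`. -/
theorem stmt7 (ω : Set C) (hω : SemiSelfOrth ω)
    {X Y : C} (hX : X ∈ CheckClass {A | AddCat ω A}) (hY : Y ∈ coAuslander ω)
    (f : X ⟶ Y⟦(1 : ℤ)⟧) :
    f = 0 := by
  obtain ⟨T', M', f', g', h', hT0', _, _, hperp⟩ := hY
  have hYperp : Y ∈ rightPerp ω := hT0' ▸ hperp 0
  obtain ⟨r, T, M, ff, gg, hh, hT0, hzero, hdist, hadd⟩ := hX
  have key : ∀ d k, k + d = r + 1 → ∀ n : ℤ, 0 < n → ∀ g : T k ⟶ Y⟦n⟧, g = 0 := by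
    intro d
    induction d with
    | zero => intro k hk n hn g; rw [Nat.add_zero] at hk; subst hk; exact hzero.eq_of_src g 0
    | succ d ih =>
      intro k hk n hn g
      have hkr : k ≤ r := by omega
      have hT := inv_rot_of_distTriang _ (hdist k hkr)
      obtain ⟨ψ, hψ⟩ := Pretriangulated.Triangle.yoneda_exact₂ _ hT g (by
        apply shift_neg_one_hom_zero
        intro v
        exact ih (k + 1) (by omega) (n + 1) (by omega) v)
      have : ψ = 0 := addCat_hom_zero ω hYperp (hadd k hkr) n hn ψ
      rw [hψ, this, comp_zero]; rfl
  subst hT0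
  exact key (r + 1) 0 (Nat.zero_add _) 1 one_pos f
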